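/- (Exact value of the truncated inner-region integral I₁ of Appendix A) Let c > 0, R > 0, real α and ψ, and 0 ≤ θ* < π. Then (1/((π − θ*)·R²)) · ∫_{θ*}^{2π−θ*} ∫₀^{c} c^{−α}·[1 − (α/2)·x(r,θ) + (α(α+2)/8)·x(r,θ)²]·r dr dθ, where x(r,θ) = (r/c)² − 2(r/c)·cos(θ − ψ), equals (c^{−(α−2)}/R²)·{ 1 − [α/4 + (2α/(3(π − θ*)))·sin(θ*)·cos(ψ)] + (α(α+2)/8)·[4/3 + (1/(π − θ*))·((8/5)·sin(θ*)·cos(ψ) − (1/2)·sin(2θ*)·cos(2ψ))] }. -/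

import Mathlib

open Real

/-- Exact value of the truncated inner-region integral I₁ of Appendix A. -/
theorem appendixA_inner_integral (c R α ψ θs : ℝ) (hc : 0 < c) (hR : 0 < R)
    (h0 : 0 ≤ θs) (h1 : θs < π) :
    (1 / ((π - θs) * R ^ 2)) *
        (∫ θ in θs..(2 * π - θs), ∫ r in (0:ℝ)..c,
          c ^ (-α) *
            (1 - (α / 2) * ((r / c) ^ 2 - 2 * (r / c) * Real.cos (θ - ψ))
              + (α * (α + 2) / 8) *
                  ((r / c) ^ 2 - 2 * (r / c) * Real.cos (θ - ψ)) ^ 2) * r)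
      = (c ^ (-(α - 2)) / R ^ 2) *
          (1 - (α / 4 + (2 * α / (3 * (π - θs))) * Real.sin θs * Real.cos ψ)
            + (α * (α + 2) / 8) *
                (4 / 3 + (1 / (π - θs)) *
                  ((8 / 5) * Real.sin θs * Real.cos ψ
                    - (1 / 2) * Real.sin (2 * θs) * Real.cos (2 * ψ)))) := by
  have hc0 : c ≠ 0 := ne_of_gt hc
  have hR0 : R ≠ 0 := ne_of_gt hR
  have hP : π - θs ≠ 0 := ne_of_gt (by linarith)
  set K := c ^ (-α) with hK
  set A := α * (α + 2) / 8 with hA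
  -- Step 1: the inner integral in r
  have inner : ∀ θ : ℝ,
      (∫ r in (0:ℝ)..c,
        K * (1 - (α / 2) * ((r / c) ^ 2 - 2 * (r / c) * Real.cos (θ - ψ))
          + A * ((r / c) ^ 2 - 2 * (r / c) * Real.cos (θ - ψ)) ^ 2) * r)
      = K * c ^ 2 * ((1 / 2 - α / 8 + A / 6)
          + (α / 3 - 4 * A / 5) * Real.cos (θ - ψ)
          + A * Real.cos (θ - ψ) ^ 2) := by
    intro θ
    set u := Real.cos (θ - ψ) with hu
    set b1 := K / 2 with hb1
    set b2 := K * α * u / (3 * c) with hb2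
    set b3 := K * (4 * A * u ^ 2 - α / 2) / (4 * c ^ 2) with hb3
    set b4 := -(4 * K * A * u) / (5 * c ^ 3) with hb4
    set b5 := K * A / (6 * c ^ 4) with hb5
    have key := intervalIntegral.integral_eq_sub_of_hasDerivAt
      (f := fun r : ℝ => b1 * r ^ 2 + b2 * r ^ 3 + b3 * r ^ 4 + b4 * r ^ 5 + b5 * r ^ 6)
      (f' := fun r : ℝ => K * (1 - (α / 2) * ((r / c) ^ 2 - 2 * (r / c) * u)
          + A * ((r / c) ^ 2 - 2 * (r / c) * u) ^ 2) * r)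
      (a := 0) (b := c)
      (fun r _ => by
        have H : HasDerivAt
            (fun r : ℝ => b1 * r ^ 2 + b2 * r ^ 3 + b3 * r ^ 4 + b4 * r ^ 5 + b5 * r ^ 6)
            (b1 * (2 * r) + b2 * (3 * r ^ 2) + b3 * (4 * r ^ 3)
              + b4 * (5 * r ^ 4) + b5 * (6 * r ^ 5)) r := by
          have h2 := (hasDerivAt_pow 2 r).const_mul b1
          have h3 := (hasDerivAt_pow 3 r).const_mul b2
          have h4 := (hasDerivAt_pow 4 r).const_mul b3
          have h5 := (hasDerivAt_pow 5 r).const_mul b4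
          have h6 := (hasDerivAt_pow 6 r).const_mul b5
          have := (((h2.add h3).add h4).add h5).add h6
          exact this.congr_deriv (by push_cast; ring)
        have hval : K * (1 - (α / 2) * ((r / c) ^ 2 - 2 * (r / c) * u)
              + A * ((r / c) ^ 2 - 2 * (r / c) * u) ^ 2) * r
            = b1 * (2 * r) + b2 * (3 * r ^ 2) + b3 * (4 * r ^ 3)
              + b4 * (5 * r ^ 4) + b5 * (6 * r ^ 5) := by
          rw [hb1, hb2, hb3, hb4, hb5]
          field_simp
          ring
        exact H.congr_deriv hval.symm)
      (by
        apply Continuous.intervalIntegrable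
        fun_prop)
    rw [key]
    rw [hb1, hb2, hb3, hb4, hb5]
    field_simp
    ring
  simp only [inner]
  -- Step 2: the outer integral in θ
  set d0 := K * c ^ 2 * ((1 / 2 - α / 8 + A / 6) + A / 2) with hd0
  set d1 := K * c ^ 2 * (α / 3 - 4 * A / 5) with hd1
  set d2 := K * c ^ 2 * A / 4 with hd2
  have key2 := intervalIntegral.integral_eq_sub_of_hasDerivAt
    (f := fun θ : ℝ => d0 * θ + d1 * Real.sin (θ - ψ) + d2 * Real.sin (2 * (θ - ψ)))
    (f' := fun θ : ℝ => K * c ^ 2 * ((1 / 2 - α / 8 + A / 6)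
          + (α / 3 - 4 * A / 5) * Real.cos (θ - ψ)
          + A * Real.cos (θ - ψ) ^ 2))
    (a := θs) (b := 2 * π - θs)
    (fun θ _ => by
      have hs : HasDerivAt (fun θ : ℝ => Real.sin (θ - ψ)) (Real.cos (θ - ψ)) θ := by
        exact ((Real.hasDerivAt_sin (θ - ψ)).comp θ ((hasDerivAt_id θ).sub_const ψ)).congr_deriv (mul_one _)
      have hs2 : HasDerivAt (fun θ : ℝ => Real.sin (2 * (θ - ψ)))
          (2 * Real.cos (2 * (θ - ψ))) θ := by
        have := (Real.hasDerivAt_sin (2 * (θ - ψ))).comp θ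
          (((hasDerivAt_id θ).sub_const ψ).const_mul 2)
        exact this.congr_deriv (by ring)
      have H := (((hasDerivAt_id θ).const_mul d0).add (hs.const_mul d1)).add
        (hs2.const_mul d2)
      refine H.congr_deriv ?_
      beta_reduce
      rw [Real.cos_two_mul (θ - ψ)]
      rw [hd0, hd1, hd2]
      ring)
    (by
      apply Continuous.intervalIntegrable
      fun_prop)
  rw [key2]
  have e1 : Real.sin (2 * π - θs - ψ) - Real.sin (θs - ψ)
      = -2 * Real.sin θs * Real.cos ψ := by
    have h : 2 * π - θs - ψ = 2 * π - (θs + ψ) := by ring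
    rw [h, Real.sin_sub (2 * π) (θs + ψ), Real.sin_two_pi, Real.cos_two_pi,
      Real.sin_add, Real.sin_sub θs ψ]
    ring
  have e2 : Real.sin (2 * (2 * π - θs - ψ)) - Real.sin (2 * (θs - ψ))
      = -2 * Real.sin (2 * θs) * Real.cos (2 * ψ) := by
    have h : 2 * (2 * π - θs - ψ) = 2 * π - (2 * θs + 2 * ψ) + 2 * π := by ring
    have h' : 2 * (θs - ψ) = 2 * θs - 2 * ψ := by ring
    rw [h, h', Real.sin_add_two_pi, Real.sin_sub (2 * π) (2 * θs + 2 * ψ),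
      Real.sin_two_pi, Real.cos_two_pi, Real.sin_add, Real.sin_sub (2 * θs) (2 * ψ)]
    ring
  have hKc : c ^ (-(α - 2)) = K * c ^ 2 := by
    rw [hK, show -(α - 2) = -α + 2 by ring, Real.rpow_add hc]
    norm_num [Real.rpow_natCast c 2]
  rw [hKc]
  have expand : d0 * (2 * π - θs) + d1 * Real.sin (2 * π - θs - ψ)
        + d2 * Real.sin (2 * (2 * π - θs - ψ))
        - (d0 * θs + d1 * Real.sin (θs - ψ) + d2 * Real.sin (2 * (θs - ψ)))
      = d0 * (2 * (π - θs)) + d1 * (-2 * Real.sin θs * Real.cos ψ)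
        + d2 * (-2 * Real.sin (2 * θs) * Real.cos (2 * ψ)) := by
    rw [← e1, ← e2]; ring
  rw [show (2 * π - θs - ψ) = (2 * π - θs) - ψ by ring] at expand
  rw [expand]
  rw [hd0, hd1, hd2]
  field_simp
  ring
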